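/- For every real α > 2 and every ε > 0, there exist positive integers r, s, t with s ≥ 3 such that the word obtained by deleting the first t letters of μ^s(0) begins with 00, and the rational β = r − t/2^s satisfies β < α and α − β < ε. -/

import Mathlib

/-- Thue–Morse morphism: 0 ↦ 01, 1 ↦ 10 (false = 0, true = 1). -/
def mu : List Bool → List Bool :=
  fun w => w.flatMap (fun b => if b then [true, false] else [false, true])

/-- `w` has period `p`: `w[i] = w[i+p]` whenever both defined. -/
def HasPeriod (w : List Bool) (p : ℕ) : Prop :=
  ∀ i, i + p < w.length → w[i]? = w[i + p]?

/-- `w` is α-power-free: no factor `u` has a period `p` with `|u|/p ≥ α`. -/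
def PowerFree (α : ℝ) (w : List Bool) : Prop :=
  ∀ u p, u <:+: w → 0 < p → HasPeriod u p → (u.length : ℝ) / p < α

/-- `𝓛`: factors of images of `mu`. -/
def InL (w : List Bool) : Prop := ∃ x, w <:+: mu x

lemma mu_append (a b : List Bool) : mu (a ++ b) = mu a ++ mu b := by
  simp [mu]

lemma mu_cons (b : Bool) (w : List Bool) : mu (b :: w) = mu [b] ++ mu w := by
  simp [mu]

lemma length_mu (w : List Bool) : (mu w).length = 2 * w.length := by
  induction w with
  | nil => rfl
  | cons b t ih => rw [mu_cons, List.length_append, ih]; cases b <;> simp [mu] <;> ring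

lemma length_mu_iter (m : ℕ) (w : List Bool) : (mu^[m] w).length = 2 ^ m * w.length := by
  induction m generalizing w with
  | zero => simp
  | succ n ih => rw [Function.iterate_succ_apply, ih, length_mu]; ring


lemma key (w : List Bool) (k : ℕ) (hk : k < w.length) :
    ∃ j, 0 < j ∧ j < 8 ∧ [false,false] <+: (mu (mu (mu w))).drop (8*k + j) := by
  have hsplit : w = w.take k ++ (w[k] :: w.drop (k+1)) := by
    rw [List.getElem_cons_drop hk, List.take_append_drop]
  have hlen : (mu (mu (mu (w.take k)))).length = 8 * k := by
    simp [length_mu, List.length_take, Nat.min_eq_left hk.le]; ring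
  have hexp : mu (mu (mu w)) = mu (mu (mu (w.take k))) ++
      (mu (mu (mu [w[k]])) ++ mu (mu (mu (w.drop (k+1))))) := by
    conv_lhs => rw [hsplit]
    rw [mu_append, mu_append, mu_append, mu_cons, mu_append, mu_append]
  cases hb : w[k] with
  | false =>
    refine ⟨5, by norm_num, by norm_num, ?_⟩
    rw [hexp, hb, show 8*k+5 = (mu (mu (mu (w.take k)))).length + 5 by rw [hlen],
      List.drop_length_add_append]
    show [false,false] <+: (([false,true,true,false,true,false,false,true] : List Bool)
      ++ mu (mu (mu (w.drop (k+1))))).drop 5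
    exact ⟨_, rfl⟩
  | true =>
    refine ⟨1, by norm_num, by norm_num, ?_⟩
    rw [hexp, hb, show 8*k+1 = (mu (mu (mu (w.take k)))).length + 1 by rw [hlen],
      List.drop_length_add_append]
    show [false,false] <+: (([true,false,false,true,false,true,true,false] : List Bool)
      ++ mu (mu (mu (w.drop (k+1))))).drop 1
    exact ⟨_, rfl⟩

theorem obtainable_dense (α : ℝ) (hα : 2 < α) (ε : ℝ) (hε : 0 < ε) :
    ∃ r s t : ℕ, 0 < r ∧ 3 ≤ s ∧ 0 < t ∧
      [false, false] <+: (mu^[s] [false]).drop t ∧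
      (r : ℝ) - t / 2 ^ s < α ∧ α - ((r : ℝ) - t / 2 ^ s) < ε := by
  obtain ⟨r, hr0, hαr, hrα⟩ : ∃ r : ℕ, 0 < r ∧ α ≤ r ∧ (r:ℝ) < α + 1 := by
    refine ⟨⌈α⌉.toNat, ?_, ?_, ?_⟩
    · have : (1:ℤ) ≤ ⌈α⌉ := Int.ceil_pos.2 (by linarith)
      omega
    all_goals
      have hc0 : (0:ℤ) ≤ ⌈α⌉ := Int.ceil_nonneg (by linarith)
      have hcast : ((⌈α⌉.toNat : ℕ) : ℝ) = ((⌈α⌉ : ℤ) : ℝ) := by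
        exact_mod_cast congrArg (fun z : ℤ => (z:ℝ)) (Int.toNat_of_nonneg hc0)
      rw [hcast]
    · exact Int.le_ceil α
    · exact_mod_cast Int.ceil_lt_add_one α
  obtain ⟨δ, hδ0, hδε, hδγ⟩ : ∃ δ:ℝ, 0 < δ ∧ δ ≤ ε ∧ δ ≤ 1 - ((r:ℝ) - α) :=
    ⟨min ε (1 - ((r:ℝ) - α)), lt_min hε (by linarith), min_le_left _ _, min_le_right _ _⟩
  obtain ⟨n, hn⟩ := pow_unbounded_of_one_lt (17 / δ) (one_lt_two (α := ℝ))
  have h17 : 17 < 2 ^ n * δ := by rw [div_lt_iff₀ hδ0] at hn; linarith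
  set s : ℕ := n + 3 with hs
  have h17s : (17:ℝ) < 2 ^ s * δ := by
    have hpow : (2:ℝ) ^ n ≤ 2 ^ s := by
      apply pow_le_pow_right₀ (by norm_num); omega
    nlinarith
  have hx0 : (0:ℝ) ≤ ((r:ℝ) - α) * 2 ^ s := by
    have : (0:ℝ) ≤ (r:ℝ) - α := by linarith
    positivity
  obtain ⟨k, hk_lb, hk_ub⟩ :
      ∃ k : ℕ, ((r:ℝ) - α) * 2 ^ s < 8 * k ∧ 8 * (k:ℝ) ≤ ((r:ℝ) - α) * 2 ^ s + 8 := by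
    set x : ℝ := ((r:ℝ) - α) * 2 ^ s
    have hfl0 : (0:ℤ) ≤ ⌊x / 8⌋ := Int.floor_nonneg.2 (by positivity)
    refine ⟨⌊x / 8⌋.toNat + 1, ?_, ?_⟩
    · have h1 := Int.lt_floor_add_one (x / 8)
      have h2 : ((⌊x / 8⌋.toNat : ℕ) : ℝ) = ((⌊x / 8⌋ : ℤ) : ℝ) := by
        exact_mod_cast congrArg (fun z : ℤ => (z:ℝ)) (Int.toNat_of_nonneg hfl0)
      push_cast [h2]
      linarith
    · have h1 := Int.floor_le (x / 8)
      have h2 : ((⌊x / 8⌋.toNat : ℕ) : ℝ) = ((⌊x / 8⌋ : ℤ) : ℝ) := by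
        exact_mod_cast congrArg (fun z : ℤ => (z:ℝ)) (Int.toNat_of_nonneg hfl0)
      push_cast [h2]
      linarith
  have h2s : (0:ℝ) < 2 ^ s := by positivity
  have h2seq : (2:ℝ) ^ s = 8 * 2 ^ n := by rw [hs]; ring
  have hkn : k < 2 ^ n := by
    have h1 : 8 * (k:ℝ) < 8 * 2 ^ n := by
      have h2 : 2 ^ s * δ ≤ 2 ^ s * (1 - ((r:ℝ) - α)) :=
        mul_le_mul_of_nonneg_left hδγ (le_of_lt h2s)
      nlinarith
    have : (k:ℝ) < 2 ^ n := by linarith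
    exact_mod_cast this
  have hwlen : k < (mu^[n] [false]).length := by
    rw [length_mu_iter]; simpa using hkn
  obtain ⟨j, hj0, hj8, hpre⟩ := key (mu^[n] [false]) k hwlen
  refine ⟨r, s, 8 * k + j, hr0, by omega, by omega, ?_, ?_, ?_⟩
  · have : mu^[s] [false] = mu (mu (mu (mu^[n] [false]))) := by
      rw [hs, show n + 3 = 3 + n by ring, Function.iterate_add_apply]
      rfl
    rw [this]; exact hpre
  · have ht : ((r:ℝ) - α) * 2 ^ s < ((8 * k + j : ℕ) : ℝ) := by push_cast; nlinarith
    rw [sub_lt_iff_lt_add, ← sub_lt_iff_lt_add', lt_div_iff₀ h2s]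
    linarith
  · have hj8' : (j:ℝ) < 8 := by exact_mod_cast hj8
    have ht : ((8 * k + j : ℕ) : ℝ) < ((r:ℝ) - α) * 2 ^ s + 2 ^ s * δ := by
      push_cast; linarith
    have h2 : ((8 * k + j : ℕ) : ℝ) / 2 ^ s < ((r:ℝ) - α) + δ := by
      rw [div_lt_iff₀ h2s]; nlinarith
    have h3 : ((8 * k + j : ℕ) : ℝ) / 2 ^ s < ((r:ℝ) - α) + ε := by linarith
    linarith
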